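/- For ω-cpo presentations P and Q, equip the product preorder P × Q with the cover relation generated by (p, q) ◁ U × {q} whenever p ◁ U in P, and (p, q) ◁ {p} × V whenever q ◁ V in Q. Then the canonical map (P × Q)_ω → P_ω × Q_ω induced by the projections is an order isomorphism. -/

import Mathlib

/-- A map between preorders is ω-(Scott-)continuous if it is monotone and preserves
least upper bounds of enumerable directed subsets. -/
def OmegaContinuous {C D : Type} [Preorder C] [Preorder D] (f : C → D) : Prop :=
  Monotone f ∧
    ∀ (U : Set C) (x : C), U.Countable → U.Nonempty → DirectedOn (· ≤ ·) U →
      IsLUB U x → IsLUB (f '' U) (f x)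

/-- A preorder is an ω-cpo if every enumerable directed subset has a least upper bound. -/
def IsOmegaCPO (C : Type) [Preorder C] : Prop :=
  ∀ U : Set C, U.Countable → U.Nonempty → DirectedOn (· ≤ ·) U → ∃ x, IsLUB U x

/-- A cover-preserving monotone map from an ω-cpo presentation `(P, Cov)` into an
ordered set: the image of each cover has a least upper bound above the image of the
covered element. -/
def CovMorphism {P C : Type} [Preorder P] [Preorder C]
    (Cov : P → Set P → Prop) (f : P → C) : Prop :=
  Monotone f ∧ ∀ p U, Cov p U → ∃ s, IsLUB (f '' U) s ∧ f p ≤ s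

/-- `(Pω, η)` is the free ω-cpo completion of the ω-cpo presentation `(P, Cov)`:
`Pω` is an ω-cpo, `η` is a cover-preserving monotone map, and every cover-preserving
monotone map from `P` into an ω-cpo extends uniquely to an ω-continuous map on `Pω`. -/
structure IsFreeOmegaCompletion {P : Type} [Preorder P] (Cov : P → Set P → Prop)
    (Pω : Type) [PartialOrder Pω] (η : P → Pω) : Prop where
  cpo : IsOmegaCPO Pω
  eta_morph : CovMorphism Cov η
  extend_unique : ∀ (C : Type) [PartialOrder C], IsOmegaCPO C →
    ∀ f : P → C, CovMorphism Cov f →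
      ∃! g : Pω → C, OmegaContinuous g ∧ ∀ p, g (η p) = f p

/-- The cover relation on the product preorder `P × Q`, generated by
`(p, q) ◁ U × {q}` whenever `p ◁ U` in `P`, and `(p, q) ◁ {p} × V` whenever
`q ◁ V` in `Q`. -/
inductive ProdCov {P Q : Type} (CovP : P → Set P → Prop) (CovQ : Q → Set Q → Prop) :
    P × Q → Set (P × Q) → Prop
  | left {p : P} {q : Q} {U : Set P} :
      CovP p U → ProdCov CovP CovQ (p, q) ((fun u => (u, q)) '' U)
  | right {p : P} {q : Q} {V : Set Q} :
      CovQ q V → ProdCov CovP CovQ (p, q) ((fun v => (p, v)) '' V)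

-- helpers
lemma directedOn_image_mono {A B : Type*} [Preorder A] [Preorder B] {f : A → B}
    (hf : Monotone f) {U : Set A} (hU : DirectedOn (· ≤ ·) U) :
    DirectedOn (· ≤ ·) (f '' U) :=
  directedOn_image.mpr (hU.mono fun _ _ h => hf h)

lemma omegaContinuous_id {C : Type} [Preorder C] : OmegaContinuous (id : C → C) := by
  refine ⟨monotone_id, fun U x _ _ _ hx => ?_⟩
  simpa using hx

lemma omegaContinuous_comp {C D E : Type} [Preorder C] [Preorder D] [Preorder E]
    {f : C → D} {g : D → E} (hf : OmegaContinuous f) (hg : OmegaContinuous g) :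
    OmegaContinuous (g ∘ f) := by
  refine ⟨hg.1.comp hf.1, fun U x hc hne hd hx => ?_⟩
  have h1 := hf.2 U x hc hne hd hx
  have h2 := hg.2 (f '' U) (f x) (hc.image f) (hne.image f) (directedOn_image_mono hf.1 hd) h1
  simpa [Set.image_image, Function.comp] using h2

/-- Induction principle for free ω-cpo completions. -/
lemma free_induction {P Pω : Type} [Preorder P] [PartialOrder Pω]
    {Cov : P → Set P → Prop} {η : P → Pω}
    (h : IsFreeOmegaCompletion Cov Pω η)
    (hCov : ∀ p U, Cov p U → U.Countable ∧ U.Nonempty ∧ DirectedOn (· ≤ ·) U)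
    (S : Set Pω) (hη : ∀ p, η p ∈ S)
    (hcl : ∀ U : Set Pω, U ⊆ S → U.Countable → U.Nonempty → DirectedOn (· ≤ ·) U →
      ∀ x, IsLUB U x → x ∈ S) :
    ∀ x, x ∈ S := by
  classical
  -- subtype lub transfer
  have subLUB : ∀ (W : Set S) (s : Pω) (hs : s ∈ S),
      IsLUB (Subtype.val '' W) s → IsLUB W ⟨s, hs⟩ := by
    intro W s hs hW
    constructor
    · intro w hw
      exact hW.1 ⟨w, hw, rfl⟩
    · intro c hc
      refine hW.2 ?_
      rintro _ ⟨w, hw, rfl⟩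
      exact hc hw
  have cpoS : IsOmegaCPO S := by
    intro W hc hne hd
    have hc' : (Subtype.val '' W).Countable := hc.image _
    have hne' : (Subtype.val '' W).Nonempty := hne.image _
    have hd' : DirectedOn (· ≤ ·) (Subtype.val '' W) :=
      directedOn_image_mono (f := (Subtype.val : S → Pω)) (fun _ _ h => h) hd
    obtain ⟨s, hsl⟩ := h.cpo _ hc' hne' hd'
    have hsS : s ∈ S := hcl _ (by rintro _ ⟨w, _, rfl⟩; exact w.2) hc' hne' hd' s hsl
    exact ⟨⟨s, hsS⟩, subLUB W s hsS hsl⟩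
  -- η into S is a CovMorphism
  have ηS : CovMorphism Cov (fun p => (⟨η p, hη p⟩ : S)) := by
    refine ⟨fun a b hab => h.eta_morph.1 hab, fun p U hpU => ?_⟩
    obtain ⟨s, hsl, hps⟩ := h.eta_morph.2 p U hpU
    obtain ⟨hUc, hUne, hUd⟩ := hCov p U hpU
    have himsub : (η '' U) ⊆ S := by rintro _ ⟨u, _, rfl⟩; exact hη u
    have hsS : s ∈ S := hcl _ himsub (hUc.image _) (hUne.image _)
      (directedOn_image_mono h.eta_morph.1 hUd) s hsl
    refine ⟨⟨s, hsS⟩, ?_, hps⟩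
    have : Subtype.val '' ((fun p => (⟨η p, hη p⟩ : S)) '' U) = η '' U := by
      simp [Set.image_image]
    exact subLUB _ s hsS (by rw [this]; exact hsl)
  obtain ⟨g, ⟨hgc, hgη⟩, _⟩ := h.extend_unique S cpoS _ ηS
  -- val ∘ g is ω-continuous
  have hvg : OmegaContinuous (fun x => (g x).val) := by
    refine ⟨fun a b hab => hgc.1 hab, fun U x hc hne hd hx => ?_⟩
    have hgl := hgc.2 U x hc hne hd hx
    have hc' : (Subtype.val '' (g '' U)).Countable := (hc.image _).image _
    have hne' : (Subtype.val '' (g '' U)).Nonempty := (hne.image _).image _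
    have hd' : DirectedOn (· ≤ ·) (Subtype.val '' (g '' U)) :=
      directedOn_image_mono (f := (Subtype.val : S → Pω)) (fun _ _ h => h)
        (directedOn_image_mono hgc.1 hd)
    obtain ⟨s, hsl⟩ := h.cpo _ hc' hne' hd'
    have hsS : s ∈ S := hcl _ (by rintro _ ⟨w, _, rfl⟩; exact w.2) hc' hne' hd' s hsl
    have : g x = ⟨s, hsS⟩ := hgl.unique (subLUB _ s hsS hsl)
    have h2 : IsLUB (Subtype.val '' (g '' U)) (g x).val := by rw [this]; exact hsl
    simpa [Set.image_image] using h2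
  obtain ⟨e, _, hue⟩ := h.extend_unique Pω h.cpo η h.eta_morph
  have h1 : (fun x => (g x).val) = e := hue _ ⟨hvg, fun p => by show (g (η p)).val = η p; rw [hgη p]⟩
  have h2 : (id : Pω → Pω) = e := hue _ ⟨omegaContinuous_id, fun p => rfl⟩
  intro x
  have hx : (g x).val = x := congrFun (h1.trans h2.symm) x
  rw [← hx]; exact (g x).2

-- separate continuity of jointly continuous maps on a product
lemma sepCont_left {A B C : Type} [Preorder A] [Preorder B] [Preorder C]
    {g : A × B → C} (hg : OmegaContinuous g)
    {D : Set A} (hc : D.Countable) (hne : D.Nonempty) (hd : DirectedOn (· ≤ ·) D)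
    {x : A} (hx : IsLUB D x) (y : B) :
    IsLUB ((fun a => g (a, y)) '' D) (g (x, y)) := by
  have hmk : Monotone (fun a : A => (a, y)) := fun _ _ h => ⟨h, le_rfl⟩
  have hU := hg.2 ((fun a => (a, y)) '' D) (x, y) (hc.image _) (hne.image _)
    (directedOn_image_mono hmk hd) ?_
  · simpa [Set.image_image] using hU
  · constructor
    · rintro _ ⟨a, ha, rfl⟩
      exact ⟨hx.1 ha, le_refl y⟩
    · rintro ⟨c, d⟩ hcd
      obtain ⟨a0, ha0⟩ := hne
      have h0 := hcd ⟨a0, ha0, rfl⟩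
      refine ⟨hx.2 fun a ha => (hcd ⟨a, ha, rfl⟩).1, h0.2⟩

lemma sepCont_right {A B C : Type} [Preorder A] [Preorder B] [Preorder C]
    {g : A × B → C} (hg : OmegaContinuous g)
    {D : Set B} (hc : D.Countable) (hne : D.Nonempty) (hd : DirectedOn (· ≤ ·) D)
    {y : B} (hy : IsLUB D y) (x : A) :
    IsLUB ((fun b => g (x, b)) '' D) (g (x, y)) := by
  have hmk : Monotone (fun b : B => (x, b)) := fun _ _ h => ⟨le_rfl, h⟩
  have hU := hg.2 ((fun b => (x, b)) '' D) (x, y) (hc.image _) (hne.image _)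
    (directedOn_image_mono hmk hd) ?_
  · simpa [Set.image_image] using hU
  · constructor
    · rintro _ ⟨b, hb, rfl⟩
      exact ⟨le_refl x, hy.1 hb⟩
    · rintro ⟨c, d⟩ hcd
      obtain ⟨b0, hb0⟩ := hne
      have h0 := hcd ⟨b0, hb0, rfl⟩
      refine ⟨h0.1, hy.2 fun b hb => (hcd ⟨b, hb, rfl⟩).2⟩

lemma prod_isOmegaCPO {A B : Type} [PartialOrder A] [PartialOrder B]
    (hA : IsOmegaCPO A) (hB : IsOmegaCPO B) : IsOmegaCPO (A × B) := by
  intro U hc hne hd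
  obtain ⟨x, hx⟩ := hA (Prod.fst '' U) (hc.image _) (hne.image _)
    (directedOn_image_mono monotone_fst hd)
  obtain ⟨y, hy⟩ := hB (Prod.snd '' U) (hc.image _) (hne.image _)
    (directedOn_image_mono monotone_snd hd)
  exact ⟨(x, y), isLUB_prod.2 ⟨hx, hy⟩⟩

/-- The product of two free completions is the free completion of the product cover. -/
lemma prod_free {P Q Pω Qω : Type} [Preorder P] [Preorder Q]
    [PartialOrder Pω] [PartialOrder Qω]
    {CovP : P → Set P → Prop} {CovQ : Q → Set Q → Prop}
    (hP : ∀ p U, CovP p U → U.Countable ∧ U.Nonempty ∧ DirectedOn (· ≤ ·) U)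
    (hQ : ∀ q V, CovQ q V → V.Countable ∧ V.Nonempty ∧ DirectedOn (· ≤ ·) V)
    {ηP : P → Pω} {ηQ : Q → Qω}
    (hPω : IsFreeOmegaCompletion CovP Pω ηP)
    (hQω : IsFreeOmegaCompletion CovQ Qω ηQ) :
    IsFreeOmegaCompletion (ProdCov CovP CovQ) (Pω × Qω)
      (fun pq => (ηP pq.1, ηQ pq.2)) := by
  classical
  constructor
  · exact prod_isOmegaCPO hPω.cpo hQω.cpo
  · -- eta_morph
    refine ⟨fun a b hab => ⟨hPω.eta_morph.1 hab.1, hQω.eta_morph.1 hab.2⟩, ?_⟩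
    rintro ⟨p, q⟩ W hW
    cases hW with
    | left hpU =>
      rename_i U
      obtain ⟨s, hsl, hps⟩ := hPω.eta_morph.2 _ _ hpU
      obtain ⟨u0, hu0⟩ := (hP _ _ hpU).2.1
      refine ⟨(s, ηQ q), ?_, hps, le_refl _⟩
      constructor
      · rintro _ ⟨_, ⟨u, hu, rfl⟩, rfl⟩
        exact ⟨hsl.1 ⟨u, hu, rfl⟩, le_refl _⟩
      · rintro ⟨c, d⟩ hcd
        have h0 := hcd ⟨(u0, q), ⟨u0, hu0, rfl⟩, rfl⟩
        refine ⟨hsl.2 ?_, h0.2⟩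
        rintro _ ⟨u, hu, rfl⟩
        exact (hcd ⟨(u, q), ⟨u, hu, rfl⟩, rfl⟩).1
    | right hqV =>
      rename_i V
      obtain ⟨s, hsl, hqs⟩ := hQω.eta_morph.2 _ _ hqV
      obtain ⟨v0, hv0⟩ := (hQ _ _ hqV).2.1
      refine ⟨(ηP p, s), ?_, le_refl _, hqs⟩
      constructor
      · rintro _ ⟨_, ⟨v, hv, rfl⟩, rfl⟩
        exact ⟨le_refl _, hsl.1 ⟨v, hv, rfl⟩⟩
      · rintro ⟨c, d⟩ hcd
        have h0 := hcd ⟨(p, v0), ⟨v0, hv0, rfl⟩, rfl⟩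
        refine ⟨h0.1, hsl.2 ?_⟩
        rintro _ ⟨v, hv, rfl⟩
        exact (hcd ⟨(p, v), ⟨v, hv, rfl⟩, rfl⟩).2
  · -- extend_unique
    intro C _ hC h hh
    -- for each q, p ↦ h (p,q) is a CovP-morphism
    have morphP : ∀ q : Q, CovMorphism CovP (fun p => h (p, q)) := by
      intro q
      refine ⟨fun a b hab => hh.1 ⟨hab, le_refl q⟩, fun p U hpU => ?_⟩
      obtain ⟨s, hsl, hps⟩ := hh.2 (p, q) _ (ProdCov.left hpU)
      exact ⟨s, by simpa [Set.image_image] using hsl, hps⟩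
    choose G hG using fun q =>
      (hPω.extend_unique C hC _ (morphP q)).exists
    have hG1 : ∀ q, OmegaContinuous (G q) := fun q => (hG q).1
    have hG2 : ∀ q p, G q (ηP p) = h (p, q) := fun q p => (hG q).2 p
    -- G is monotone in q
    have hGmono : ∀ {q q' : Q}, q ≤ q' → ∀ x, G q x ≤ G q' x := by
      intro q q' hqq'
      refine free_induction hPω hP {x | G q x ≤ G q' x} (fun p => ?_) ?_
      · simp only [Set.mem_setOf_eq, hG2]
        exact hh.1 ⟨le_refl p, hqq'⟩
      · intro U hUS hc hne hd x hx
        have hl := (hG1 q).2 U x hc hne hd hx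
        refine hl.2 ?_
        rintro _ ⟨u, hu, rfl⟩
        exact le_trans (hUS hu) ((hG1 q').1 (hx.1 hu))
    -- G preserves covers in q, at every x
    have hGcov : ∀ q V, CovQ q V → ∀ x : Pω,
        ∃ s, IsLUB ((fun v => G v x) '' V) s ∧ G q x ≤ s := by
      intro q V hqV
      obtain ⟨hVc, hVne, hVd⟩ := hQ _ _ hqV
      refine free_induction hPω hP _ (fun p => ?_) ?_
      · obtain ⟨s, hsl, hqs⟩ := hh.2 (p, q) _ (ProdCov.right hqV)
        refine ⟨s, ?_, by rwa [hG2]⟩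
        have : (fun v => G v (ηP p)) '' V = (fun v => h (p, v)) '' V :=
          Set.image_congr fun v _ => hG2 v p
        rw [this]
        simpa [Set.image_image] using hsl
      · intro U hUS hc hne hd x hx
        have hdV : DirectedOn (· ≤ ·) ((fun v => G v x) '' V) := by
          rw [directedOn_image]
          exact hVd.mono fun a b hab => hGmono hab x
        obtain ⟨s, hsl⟩ := hC _ (hVc.image _) (hVne.image _) hdV
        refine ⟨s, hsl, ?_⟩
        have hl := (hG1 q).2 U x hc hne hd hx
        refine hl.2 ?_
        rintro _ ⟨u, hu, rfl⟩
        obtain ⟨su, hsul, hqsu⟩ := hUS hu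
        refine le_trans hqsu (hsul.2 ?_)
        rintro _ ⟨v, hv, rfl⟩
        exact le_trans ((hG1 v).1 (hx.1 hu)) (hsl.1 ⟨v, hv, rfl⟩)
    -- for each x, q ↦ G q x is a CovQ-morphism; extend to K x : Qω → C
    have morphQ : ∀ x : Pω, CovMorphism CovQ (fun q => G q x) :=
      fun x => ⟨fun a b hab => hGmono hab x, fun q V hqV => hGcov q V hqV x⟩
    choose K hK using fun x =>
      (hQω.extend_unique C hC _ (morphQ x)).exists
    have hK1 : ∀ x, OmegaContinuous (K x) := fun x => (hK x).1
    have hK2 : ∀ x q, K x (ηQ q) = G q x := fun x q => (hK x).2 q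
    -- K is monotone in x
    have hKmono : ∀ {x x' : Pω}, x ≤ x' → ∀ y, K x y ≤ K x' y := by
      intro x x' hxx'
      refine free_induction hQω hQ {y | K x y ≤ K x' y} (fun q => ?_) ?_
      · simp only [Set.mem_setOf_eq, hK2]
        exact (hG1 q).1 hxx'
      · intro Y hYS hc hne hd y hy
        have hl := (hK1 x).2 Y y hc hne hd hy
        refine hl.2 ?_
        rintro _ ⟨b, hb, rfl⟩
        exact le_trans (hYS hb) ((hK1 x').1 (hy.1 hb))
    -- K is continuous in x
    have hKcont : ∀ (D : Set Pω), D.Countable → D.Nonempty → DirectedOn (· ≤ ·) D →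
        ∀ x, IsLUB D x → ∀ y, IsLUB ((fun a => K a y) '' D) (K x y) := by
      intro D hDc hDne hDd x hx
      refine free_induction hQω hQ
        {y | IsLUB ((fun a => K a y) '' D) (K x y)} (fun q => ?_) ?_
      · have : (fun a => K a (ηQ q)) = fun a => G q a := funext fun a => hK2 a q
        simp only [Set.mem_setOf_eq, this, hK2]
        exact (hG1 q).2 D x hDc hDne hDd hx
      · intro Y hYS hc hne hd y hy
        constructor
        · rintro _ ⟨a, ha, rfl⟩
          exact hKmono (hx.1 ha) y
        · intro c hc'
          have hl := (hK1 x).2 Y y hc hne hd hy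
          refine hl.2 ?_
          rintro _ ⟨b, hb, rfl⟩
          refine (hYS hb).2 ?_
          rintro _ ⟨a, ha, rfl⟩
          exact le_trans ((hK1 a).1 (hy.1 hb)) (hc' ⟨a, ha, rfl⟩)
    -- the extension
    set g0 : Pω × Qω → C := fun z => K z.1 z.2 with hg0
    have hg0mono : Monotone g0 := by
      intro z z' hzz'
      exact le_trans ((hK1 z.1).1 hzz'.2) (hKmono hzz'.1 z'.2)
    have hg0cont : OmegaContinuous g0 := by
      refine ⟨hg0mono, fun U z hc hne hd hz => ?_⟩
      obtain ⟨hx, hy⟩ := isLUB_prod.1 hz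
      constructor
      · rintro _ ⟨u, hu, rfl⟩
        exact hg0mono (hz.1 hu)
      · intro c hcub
        have hsnd : IsLUB ((K z.1) '' (Prod.snd '' U)) (K z.1 z.2) :=
          (hK1 z.1).2 _ _ (hc.image _) (hne.image _)
            (directedOn_image_mono monotone_snd hd) hy
        refine hsnd.2 ?_
        rintro _ ⟨_, ⟨u0, hu0, rfl⟩, rfl⟩
        have hfst := hKcont (Prod.fst '' U) (hc.image _) (hne.image _)
          (directedOn_image_mono monotone_fst hd) z.1 hx u0.2
        refine hfst.2 ?_
        rintro _ ⟨_, ⟨u1, hu1, rfl⟩, rfl⟩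
        obtain ⟨u2, hu2, h02, h12⟩ := hd u0 hu0 u1 hu1
        calc K u1.1 u0.2 ≤ K u2.1 u2.2 :=
              le_trans ((hK1 u1.1).1 h02.2) (hKmono h12.1 u2.2)
          _ ≤ c := hcub ⟨u2, hu2, rfl⟩
    have hg0eta : ∀ pq : P × Q, g0 (ηP pq.1, ηQ pq.2) = h pq := by
      rintro ⟨p, q⟩
      show K (ηP p) (ηQ q) = h (p, q)
      rw [hK2, hG2]
    refine ⟨g0, ⟨hg0cont, hg0eta⟩, ?_⟩
    -- uniqueness
    rintro g' ⟨hg'c, hg'η⟩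
    have key : ∀ x : Pω, ∀ y : Qω, g' (x, y) = g0 (x, y) := by
      refine free_induction hPω hP {x | ∀ y, g' (x, y) = g0 (x, y)} (fun p => ?_) ?_
      · refine free_induction hQω hQ
          {y | g' (ηP p, y) = g0 (ηP p, y)} (fun q => ?_) ?_
        · show g' (ηP p, ηQ q) = g0 (ηP p, ηQ q)
          rw [hg0eta (p, q), hg'η (p, q)]
        · intro Y hYS hc hne hd y hy
          have h1 := sepCont_right hg'c hc hne hd hy (ηP p)
          have h2 := sepCont_right hg0cont hc hne hd hy (ηP p)
          have heq : (fun b => g' (ηP p, b)) '' Y = (fun b => g0 (ηP p, b)) '' Y :=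
            Set.image_congr fun b hb => hYS hb
          rw [heq] at h1
          exact h1.unique h2
      · intro D hDS hc hne hd x hx y
        have h1 := sepCont_left hg'c hc hne hd hx y
        have h2 := sepCont_left hg0cont hc hne hd hx y
        have heq : (fun a => g' (a, y)) '' D = (fun a => g0 (a, y)) '' D :=
          Set.image_congr fun a ha => hDS ha y
        rw [heq] at h1
        exact h1.unique h2
    funext z
    exact key z.1 z.2

/-- the canonical map `(P × Q)_ω → P_ω × Q_ω` induced by the projections
is an order isomorphism. -/
theorem product_presentation
    {P Q Pω Qω PQω : Type} [Preorder P] [Preorder Q]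
    [PartialOrder Pω] [PartialOrder Qω] [PartialOrder PQω]
    (CovP : P → Set P → Prop) (CovQ : Q → Set Q → Prop)
    (hP : ∀ p U, CovP p U → U.Countable ∧ U.Nonempty ∧ DirectedOn (· ≤ ·) U)
    (hQ : ∀ q V, CovQ q V → V.Countable ∧ V.Nonempty ∧ DirectedOn (· ≤ ·) V)
    (ηP : P → Pω) (ηQ : Q → Qω) (η : P × Q → PQω)
    (hPω : IsFreeOmegaCompletion CovP Pω ηP)
    (hQω : IsFreeOmegaCompletion CovQ Qω ηQ)
    (hPQω : IsFreeOmegaCompletion (ProdCov CovP CovQ) PQω η)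
    (f : PQω → Pω × Qω) (hf : OmegaContinuous f)
    (hfη : ∀ p q, f (η (p, q)) = (ηP p, ηQ q)) :
    Function.Bijective f ∧ ∀ x y, x ≤ y ↔ f x ≤ f y := by
  classical
  have F := prod_free hP hQ hPω hQω
  -- extend η along the product completion to get the inverse g
  obtain ⟨g, ⟨hgc, hgη⟩, _⟩ := F.extend_unique PQω hPQω.cpo η hPQω.eta_morph
  -- g ∘ f = id
  have hgf : ∀ x, g (f x) = x := by
    obtain ⟨e, _, hue⟩ := hPQω.extend_unique PQω hPQω.cpo η hPQω.eta_morph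
    have h1 : g ∘ f = e := by
      refine hue _ ⟨omegaContinuous_comp hf hgc, ?_⟩
      rintro ⟨p, q⟩
      show g (f (η (p, q))) = η (p, q)
      rw [hfη p q, hgη (p, q)]
    have h2 : (id : PQω → PQω) = e := hue _ ⟨omegaContinuous_id, fun _ => rfl⟩
    intro x
    exact congrFun (h1.trans h2.symm) x
  -- f ∘ g = id
  have hfg : ∀ z, f (g z) = z := by
    obtain ⟨e, _, hue⟩ := F.extend_unique (Pω × Qω) F.cpo _ F.eta_morph
    have h1 : f ∘ g = e := by
      refine hue _ ⟨omegaContinuous_comp hgc hf, ?_⟩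
      rintro ⟨p, q⟩
      show f (g (ηP p, ηQ q)) = (ηP p, ηQ q)
      rw [hgη (p, q), hfη p q]
    have h2 : (id : Pω × Qω → Pω × Qω) = e := hue _ ⟨omegaContinuous_id, fun _ => rfl⟩
    intro z
    exact congrFun (h1.trans h2.symm) z
  refine ⟨⟨fun a b hab => ?_, fun z => ⟨g z, hfg z⟩⟩, fun x y => ⟨fun h => hf.1 h, fun h => ?_⟩⟩
  · rw [← hgf a, ← hgf b, hab]
  · have := hgc.1 h
    rwa [hgf, hgf] at this
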